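/- Let S be a generalized left-symmetric algebra with commutation factor ε and let M, N be S-bimodules. Define on M ⊗ N the actions x·(m⊗n) := (x·m − ε(α,β) m·x) ⊗ n + ε(α,β) m ⊗ (x·n) and (m⊗n)·x := m ⊗ (n·x), for x ∈ S_α, m ∈ M_β, n ∈ N. Then M ⊗ N with these actions is an S-bimodule, i.e., both identities (x·y)·u − x·(y·u) = ε(α,β')((y·x)·u − y·(x·u)) and (x·u)·y − x·(u·y) = ε(α,δ)((u·x)·y − u·(x·y)) hold for homogeneous elements (where u ∈ (M⊗N)_δ, y ∈ S_{β'}). -/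
import Mathlib


open scoped TensorProduct

def IsCommutationFactor {k Γ : Type*} [Field k] [AddCommGroup Γ] (ε : Γ → Γ → k) : Prop :=
  (∀ α β, ε α β * ε β α = 1) ∧
  (∀ α β γ, ε α (β + γ) = ε α β * ε α γ) ∧
  (∀ α β γ, ε (α + β) γ = ε α γ * ε β γ)

section

variable {k Γ S M N : Type*} [Field k] [AddCommGroup Γ]
  [AddCommGroup S] [Module k S] [AddCommGroup M] [Module k M] [AddCommGroup N] [Module k N]

/-- The left action of `x ∈ S_α` on a pure tensor `m ⊗ n` with `m ∈ M_β`: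
`x·(m⊗n) = (x·m − ε(α,β) m·x) ⊗ n + ε(α,β) m ⊗ (x·n)`. -/
noncomputable def tensLAct (ε : Γ → Γ → k) (lM : S →ₗ[k] M →ₗ[k] M) (rM : M →ₗ[k] S →ₗ[k] M)
    (lN : S →ₗ[k] N →ₗ[k] N) (α β : Γ) (x : S) (m : M) (n : N) : M ⊗[k] N :=
  (lM x m - ε α β • rM m x) ⊗ₜ[k] n + ε α β • m ⊗ₜ[k] (lN x n)

/-- `M ⊗ N` with `x·(m⊗n) = (x·m − ε(α,β)m·x)⊗n + ε(α,β) m⊗(x·n)` and `(m⊗n)·x = m⊗(n·x)`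
is an `S`-bimodule: both bimodule identities hold on homogeneous pure tensors. -/
theorem stmt5 [CharZero k]
    (ε : Γ → Γ → k) (𝒜 : Γ → Submodule k S) (ℳ : Γ → Submodule k M) (𝒩 : Γ → Submodule k N)
    (mul : S →ₗ[k] S →ₗ[k] S)
    (lM : S →ₗ[k] M →ₗ[k] M) (rM : M →ₗ[k] S →ₗ[k] M)
    (lN : S →ₗ[k] N →ₗ[k] N) (rN : N →ₗ[k] S →ₗ[k] N)
    (hε : IsCommutationFactor ε)
    (hgr : ∀ ⦃α β : Γ⦄ ⦃x y : S⦄, x ∈ 𝒜 α → y ∈ 𝒜 β → mul x y ∈ 𝒜 (α + β))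
    (hlsi : ∀ ⦃α β : Γ⦄ ⦃x y : S⦄ (z : S), x ∈ 𝒜 α → y ∈ 𝒜 β →
      mul (mul x y) z - mul x (mul y z) = ε α β • (mul (mul y x) z - mul y (mul x z)))
    (hdeglM : ∀ ⦃α γ : Γ⦄ ⦃x : S⦄ ⦃m : M⦄, x ∈ 𝒜 α → m ∈ ℳ γ → lM x m ∈ ℳ (α + γ))
    (hdegrM : ∀ ⦃α γ : Γ⦄ ⦃x : S⦄ ⦃m : M⦄, x ∈ 𝒜 α → m ∈ ℳ γ → rM m x ∈ ℳ (γ + α))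
    (hdeglN : ∀ ⦃α γ : Γ⦄ ⦃x : S⦄ ⦃n : N⦄, x ∈ 𝒜 α → n ∈ 𝒩 γ → lN x n ∈ 𝒩 (α + γ))
    (hdegrN : ∀ ⦃α γ : Γ⦄ ⦃x : S⦄ ⦃n : N⦄, x ∈ 𝒜 α → n ∈ 𝒩 γ → rN n x ∈ 𝒩 (γ + α))
    (hbm1M : ∀ ⦃α β : Γ⦄ ⦃x y : S⦄ (m : M), x ∈ 𝒜 α → y ∈ 𝒜 β →
      lM (mul x y) m - lM x (lM y m) = ε α β • (lM (mul y x) m - lM y (lM x m)))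
    (hbm2M : ∀ ⦃α γ : Γ⦄ ⦃x : S⦄ ⦃m : M⦄ (y : S), x ∈ 𝒜 α → m ∈ ℳ γ →
      rM (lM x m) y - lM x (rM m y) = ε α γ • (rM (rM m x) y - rM m (mul x y)))
    (hbm1N : ∀ ⦃α β : Γ⦄ ⦃x y : S⦄ (n : N), x ∈ 𝒜 α → y ∈ 𝒜 β →
      lN (mul x y) n - lN x (lN y n) = ε α β • (lN (mul y x) n - lN y (lN x n)))
    (hbm2N : ∀ ⦃α γ : Γ⦄ ⦃x : S⦄ ⦃n : N⦄ (y : S), x ∈ 𝒜 α → n ∈ 𝒩 γ →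
      rN (lN x n) y - lN x (rN n y) = ε α γ • (rN (rN n x) y - rN n (mul x y)))
    {α β γ ν : Γ} {x y : S} {m : M} {n : N}
    (hx : x ∈ 𝒜 α) (hy : y ∈ 𝒜 β) (hm : m ∈ ℳ γ) (hn : n ∈ 𝒩 ν) :
    -- first bimodule identity on the homogeneous pure tensor `m ⊗ n`
    (tensLAct ε lM rM lN (α + β) γ (mul x y) m n -
        (tensLAct ε lM rM lN α (β + γ) x (lM y m - ε β γ • rM m y) n +
          ε β γ • tensLAct ε lM rM lN α γ x m (lN y n)) =
      ε α β • (tensLAct ε lM rM lN (α + β) γ (mul y x) m n -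
        (tensLAct ε lM rM lN β (α + γ) y (lM x m - ε α γ • rM m x) n +
          ε α γ • tensLAct ε lM rM lN β γ y m (lN x n)))) ∧
    -- second bimodule identity on the homogeneous pure tensor `m ⊗ n`
    (((lM x m - ε α γ • rM m x) ⊗ₜ[k] (rN n y) + ε α γ • m ⊗ₜ[k] (rN (lN x n) y)) -
        tensLAct ε lM rM lN α γ x m (rN n y) =
      ε α (γ + ν) • ((m ⊗ₜ[k] (rN (rN n x) y)) - m ⊗ₜ[k] (rN n (mul x y)))) := by

  obtain ⟨hsym, hrow, hcol⟩ := hε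
  have ha : ε α β * ε β α = 1 := hsym α β
  have hane : ε α β ≠ 0 := left_ne_zero_of_mul_eq_one ha
  have hba : ε β α = (ε α β)⁻¹ := eq_inv_of_mul_eq_one_left (hsym β α)
  have T1 := congrArg ((TensorProduct.mk k M N).flip n) (hbm1M m hx hy)
  have T2 := congrArg ((TensorProduct.mk k M N).flip n) (hbm2M y hx hm)
  have T2' := congrArg ((TensorProduct.mk k M N).flip n) (hbm2M x hy hm)
  have TN := congrArg (TensorProduct.mk k M N m) (hbm1N n hx hy)
  have BN := congrArg (TensorProduct.mk k M N m) (hbm2N y hx hn)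
  simp only [map_sub, map_smul, LinearMap.flip_apply, TensorProduct.mk_apply] at T1 T2 T2' TN BN
  constructor
  · simp only [tensLAct, map_sub, map_smul, LinearMap.sub_apply, LinearMap.smul_apply,
      TensorProduct.sub_tmul, TensorProduct.add_tmul, ← TensorProduct.smul_tmul',
      TensorProduct.tmul_sub, TensorProduct.tmul_add, TensorProduct.tmul_smul,
      hrow, hcol, hba, smul_sub, smul_add, smul_smul]
    linear_combination (norm := match_scalars <;> (field_simp; try ring)) T1 - ε β γ • T2 + (ε α β * ε α γ) • T2' +
      (ε α γ * ε β γ) • TN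
  · simp only [tensLAct, hrow, smul_sub, smul_add, smul_smul, TensorProduct.tmul_smul]
    linear_combination (norm := module) (ε α γ) • BN
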